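/- For a finite set X with |X| = n, the submonoid of T_X generated by all idempotents equals {id_X} ∪ (T_X \ S_X), i.e., the identity together with all non-bijective transformations. -/

import Mathlib

open Function

namespace IdemGen

variable {X : Type*} [Fintype X] [DecidableEq X]

/-- The idempotent generating set. -/
def S (X : Type*) : Set (Function.End X) := {e : Function.End X | e * e = e}

/-- The map sending `b` to `a` and fixing everything else. -/
def Ee (a b : X) : Function.End X := Function.update id b a

/-- A permutation as an element of `Function.End X`. -/
def pE (σ : Equiv.Perm X) : Function.End X := ⇑σ

lemma Ee_apply (a b x : X) : Ee a b x = if x = b then a else x := by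
  simp [Ee, Function.update_apply]

lemma Ee_idem {a b : X} (hab : a ≠ b) : Ee a b * Ee a b = Ee a b := by
  funext x
  show Ee a b (Ee a b x) = Ee a b x
  by_cases hx : x = b <;> simp [Ee_apply, hx, hab]

lemma Ee_mem {a b : X} (hab : a ≠ b) : Ee a b ∈ Submonoid.closure (S X) :=
  Submonoid.subset_closure (Ee_idem hab)

lemma Ee_ne (a b x : X) (hab : a ≠ b) : Ee a b x ≠ b := by
  by_cases hx : x = b <;> simp [Ee_apply, hx, hab]

/-- Composing a swap with a non-surjective element of the closure stays in the closure. -/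
lemma swap_comp_mem {u v : X} (huv : u ≠ v) (h : Function.End X)
    (hh : h ∈ Submonoid.closure (S X)) (hns : ¬ Surjective h) :
    pE (Equiv.swap u v) * h ∈ Submonoid.closure (S X) := by
  simp only [Surjective, not_forall, not_exists] at hns
  obtain ⟨a, ha⟩ := hns
  by_cases hau : a = u
  · subst hau
    have : pE (Equiv.swap a v) * h = Ee a v * h := by
      funext z
      show Equiv.swap a v (h z) = Ee a v (h z)
      have hz := ha z
      by_cases hv : h z = v <;>
        simp [Equiv.swap_apply_def, Ee_apply, hv, hz]
    rw [this]
    exact mul_mem (Ee_mem huv) hh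
  · by_cases hav : a = v
    · subst hav
      have : pE (Equiv.swap u a) * h = Ee a u * h := by
        funext z
        show Equiv.swap u a (h z) = Ee a u (h z)
        have hz := ha z
        by_cases hu : h z = u <;>
          simp [Equiv.swap_apply_def, Ee_apply, hu, hz]
      rw [this]
      exact mul_mem (Ee_mem hau) hh
    · have : pE (Equiv.swap u v) * h
          = Ee u a * (Ee v u * (Ee a v * h)) := by
        funext z
        show Equiv.swap u v (h z) = Ee u a (Ee v u (Ee a v (h z)))
        have hz := ha z
        by_cases hu : h z = u
        · simp [Equiv.swap_apply_def, Ee_apply, hu, huv, hau, hav, Ne.symm hau, Ne.symm hav]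
        · by_cases hv : h z = v
          · simp [Equiv.swap_apply_def, Ee_apply, hv, huv, hau, hav, Ne.symm hau, Ne.symm hav, Ne.symm huv]
          · simp [Equiv.swap_apply_def, Ee_apply, hu, hv, hz]
      rw [this]
      exact mul_mem (Ee_mem (Ne.symm hau))
        (mul_mem (Ee_mem huv.symm) (mul_mem (Ee_mem hav) hh))

/-- Composing a permutation with a non-surjective element of the closure stays in the closure. -/
lemma perm_comp_mem (σ : Equiv.Perm X) :
    ∀ g : Function.End X, g ∈ Submonoid.closure (S X) → ¬ Surjective g →
      pE σ * g ∈ Submonoid.closure (S X) := by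
  refine Equiv.Perm.swap_induction_on σ ?_ ?_
  · -- identity case
    intro g hg _
    have : pE (1 : Equiv.Perm X) * g = g := by
      funext z; rfl
    rwa [this]
  · -- swap case
    intro f x y hxy ih g hg hns
    have h1 : pE f * g ∈ Submonoid.closure (S X) := ih g hg hns
    have h2 : ¬ Surjective (pE f * g) := by
      intro hs
      apply hns
      intro b
      obtain ⟨z, hz⟩ := hs (f b)
      exact ⟨z, f.injective hz⟩
    have : pE (Equiv.swap x y * f) * g
        = pE (Equiv.swap x y) * (pE f * g) := rfl
    rw [this]
    exact swap_comp_mem hxy _ h1 h2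

lemma singular_mem_aux :
    ∀ (N : ℕ) (f : Function.End X),
      Fintype.card X ≤ (Finset.univ.image f).card + N → ¬ Surjective f →
        f ∈ Submonoid.closure (S X) := by
  intro N
  induction N with
  | zero =>
    intro f hcard hns
    exfalso
    apply hns
    have : (Finset.univ.image f) = Finset.univ := by
      apply Finset.eq_univ_of_card
      exact le_antisymm (Finset.card_le_univ _) (by simpa using hcard)
    intro b
    have hb : b ∈ Finset.univ.image f := by rw [this]; exact Finset.mem_univ b
    obtain ⟨z, _, hz⟩ := Finset.mem_image.mp hb
    exact ⟨z, hz⟩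
  | succ N ih =>
    intro f hcard hns
    have hni : ¬ Injective f := fun hi => hns ((Finite.injective_iff_surjective).mp hi)
    simp only [Surjective, not_forall, not_exists] at hns
    obtain ⟨a, ha⟩ := hns
    unfold Injective at hni
    push_neg at hni
    obtain ⟨x, y, hfxy, hxy⟩ := hni
    set f' : Function.End X := Function.update f x a with hf'
    have hf'app : ∀ z, f' z = if z = x then a else f z := fun z => by
      rw [hf']; exact Function.update_apply f x a z
    have hfa : f x ≠ a := ha x
    have hdecomp : f = Ee (f x) a * f' := by
      funext z
      show f z = Ee (f x) a (f' z)
      by_cases hz : z = x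
      · subst hz; simp [hf'app, Ee_apply]
      · simp [hf'app, hz, Ee_apply, ha z]
    have himg : Finset.univ.image f' = insert a (Finset.univ.image f) := by
      refine Finset.ext fun b => ?_
      simp only [(Finset.mem_image : b ∈ Finset.univ.image f' ↔ _), (Finset.mem_image : b ∈ Finset.univ.image f ↔ _), Finset.mem_univ, true_and, Finset.mem_insert]
      constructor
      · rintro ⟨z, hz⟩
        by_cases hzx : z = x
        · subst hzx; left; rw [hf'app] at hz; simpa using hz.symm
        · right; exact ⟨z, by rw [hf'app, if_neg hzx] at hz; exact hz⟩
      · rintro (rfl | ⟨z, hz⟩)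
        · exact ⟨x, by simp [hf'app]⟩
        · by_cases hzx : z = x
          · subst hzx
            exact ⟨y, by rw [hf'app, if_neg (Ne.symm hxy)]; rw [← hfxy]; exact hz⟩
          · exact ⟨z, by rw [hf'app, if_neg hzx]; exact hz⟩
    have hcard' : (Finset.univ.image f').card = (Finset.univ.image f).card + 1 := by
      rw [himg, Finset.card_insert_of_notMem]
      simp only [(Finset.mem_image : a ∈ Finset.univ.image f ↔ _), Finset.mem_univ, true_and, not_exists]
      exact fun z => ha z
    by_cases hsurj : Surjective f'
    · -- f' is a bijection σ, and f = Ee (f x) a ∘ σ = σ ∘ (σ⁻¹ ∘ Ee (f x) a ∘ σ)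
      have hbij : Bijective f' := ⟨(Finite.injective_iff_surjective).mpr hsurj, hsurj⟩
      set σ := Equiv.ofBijective f' hbij with hσ
      have hσapp : ∀ z, σ z = f' z := fun z => rfl
      set e : Function.End X := Ee (f x) a with he
      set e' : Function.End X := pE σ.symm * (e * pE σ)
        with he'
      have he'app : ∀ z, e' z = σ.symm (e (σ z)) := fun z => rfl
      have he'idem : e' * e' = e' := by
        funext z
        show e' (e' z) = e' z
        show σ.symm (e (σ (σ.symm (e (σ z))))) = σ.symm (e (σ z))
        rw [Equiv.apply_symm_apply]
        congr 1
        exact congrFun (Ee_idem hfa) (σ z)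
      have he'mem : e' ∈ Submonoid.closure (S X) := Submonoid.subset_closure he'idem
      have he'ns : ¬ Surjective e' := by
        simp only [Surjective, not_forall, not_exists]
        refine ⟨σ.symm a, fun z hz => ?_⟩
        rw [he'app] at hz
        have : e (σ z) = a := σ.symm.injective hz
        exact Ee_ne (f x) a (σ z) hfa this
      have key := perm_comp_mem σ e' he'mem he'ns
      have : f = pE σ * e' := by
        funext z
        show f z = σ (e' z)
        rw [he'app, Equiv.apply_symm_apply, hσapp]
        exact congrFun hdecomp z
      rwa [this]
    · have hle : Fintype.card X ≤ (Finset.univ.image f').card + N := by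
        rw [hcard']; omega
      have hmem' := ih f' hle hsurj
      rw [hdecomp]
      exact mul_mem (Ee_mem hfa) hmem'

end IdemGen

/-- For a finite set `X`, the submonoid of `T_X` generated by the idempotents is
`{id} ∪ (T_X \ S_X)`, i.e. the identity together with all non-bijective maps. -/
theorem idempotent_generated_submonoid_eq (X : Type*) [Fintype X]
    (f : Function.End X) :
    f ∈ Submonoid.closure {e : Function.End X | e * e = e} ↔
      (f = 1 ∨ ¬ Function.Bijective f) := by
  classical
  constructor
  · intro hf
    induction hf using Submonoid.closure_induction with
    | mem e he =>
      by_cases hb : Function.Bijective e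
      · left
        funext z
        have := congrFun he z
        exact hb.injective this
      · exact Or.inr hb
    | one => exact Or.inl rfl
    | mul g h _ _ ihg ihh =>
      rcases ihg with rfl | hg
      · rcases ihh with rfl | hh
        · exact Or.inl (one_mul 1)
        · right
          intro hb
          apply hh
          have : (1 : Function.End X) * h = h := one_mul h
          rwa [this] at hb
      · right
        intro hb
        apply hg
        have hsg : Function.Surjective (g * h) := hb.surjective
        have : Function.Surjective g := fun b => by
          obtain ⟨z, hz⟩ := hsg b
          exact ⟨h z, hz⟩
        exact (Finite.surjective_iff_bijective).mp this
  · rintro (rfl | hb)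
    · exact one_mem _
    · have hns : ¬ Function.Surjective f := by
        intro hs
        exact hb ⟨(Finite.injective_iff_surjective).mpr hs, hs⟩
      exact IdemGen.singular_mem_aux (Fintype.card X) f (by omega) hns
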